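/- arXiv:1704.06328 — 3 statements merged into one kernel-verified Lean document; each statement's English description precedes it below -/
import Mathlib

section
/- Let η_n, η : [0,1] → ℝ be continuously differentiable functions such that η_n → η and η_n′ → η′ uniformly on [0,1]. For a C¹ function ζ let φ_ζ(x) = (∫₀ˣ exp(∫₀ˢ ζ(t) dt) ds)/(∫₀¹ exp(∫₀ˢ ζ(t) dt) ds) be the associated orientation-preserving C³ diffeomorphism of [0,1]. Then φ_{η_n} converges to φ_η in the C³ sense: φ_{η_n} → φ_η, φ_{η_n}′ → φ_η′, φ_{η_n}″ → φ_η″ and φ_{η_n}‴ → φ_η‴, all uniformly on [0,1]. -/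
open Set

/-- The orientation-preserving diffeomorphism of `[0,1]` associated to a nonlinearity `ζ`. -/
noncomputable def phiOf (ζ : ℝ → ℝ) : ℝ → ℝ := fun x =>
  (∫ s in (0:ℝ)..x, Real.exp (∫ t in (0:ℝ)..s, ζ t)) /
  (∫ s in (0:ℝ)..(1:ℝ), Real.exp (∫ t in (0:ℝ)..s, ζ t))

open MeasureTheory Filter intervalIntegral

noncomputable def Gfun (ζ : ℝ → ℝ) : ℝ → ℝ := fun x => ∫ t in (0:ℝ)..x, ζ t

noncomputable def Efun (ζ : ℝ → ℝ) : ℝ → ℝ := fun x => Real.exp (Gfun ζ x)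

noncomputable def cOf (ζ : ℝ → ℝ) : ℝ := ∫ s in (0:ℝ)..(1:ℝ), Efun ζ s

lemma hasDerivAt_Gfun {ζ : ℝ → ℝ} (hζ : Continuous ζ) (x : ℝ) :
    HasDerivAt (Gfun ζ) (ζ x) x :=
  integral_hasDerivAt_right (hζ.intervalIntegrable _ _)
    (hζ.stronglyMeasurableAtFilter _ _) hζ.continuousAt

lemma continuous_Gfun {ζ : ℝ → ℝ} (hζ : Continuous ζ) : Continuous (Gfun ζ) :=
  continuous_iff_continuousAt.2 fun x =>
    (hasDerivAt_Gfun hζ x).differentiableAt.continuousAt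

lemma continuous_Efun {ζ : ℝ → ℝ} (hζ : Continuous ζ) : Continuous (Efun ζ) :=
  Real.continuous_exp.comp (continuous_Gfun hζ)

lemma hasDerivAt_Efun {ζ : ℝ → ℝ} (hζ : Continuous ζ) (x : ℝ) :
    HasDerivAt (Efun ζ) (ζ x * Efun ζ x) x := by
  have h := (hasDerivAt_Gfun hζ x).exp
  rw [show Efun ζ = fun x => Real.exp (Gfun ζ x) from rfl]
  simpa [Efun, mul_comm] using h

lemma cOf_pos {ζ : ℝ → ℝ} (hζ : Continuous ζ) : 0 < cOf ζ :=
  intervalIntegral_pos_of_pos_on ((continuous_Efun hζ).intervalIntegrable _ _)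
    (fun x _ => Real.exp_pos _) one_pos

lemma hasDerivAt_primitive {ζ : ℝ → ℝ} (hζ : Continuous ζ) (x : ℝ) :
    HasDerivAt (fun u => ∫ s in (0:ℝ)..u, Efun ζ s) (Efun ζ x) x :=
  integral_hasDerivAt_right ((continuous_Efun hζ).intervalIntegrable _ _)
    ((continuous_Efun hζ).stronglyMeasurableAtFilter _ _)
    (continuous_Efun hζ).continuousAt

lemma hasDerivAt_phiOf {ζ : ℝ → ℝ} (hζ : Continuous ζ) (x : ℝ) :
    HasDerivAt (phiOf ζ) (Efun ζ x / cOf ζ) x :=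
  (hasDerivAt_primitive hζ x).div_const _

lemma d1 {ζ : ℝ → ℝ} (hζ : Continuous ζ) :
    iteratedDeriv 1 (phiOf ζ) = fun x => Efun ζ x / cOf ζ := by
  rw [iteratedDeriv_one]
  funext x
  exact (hasDerivAt_phiOf hζ x).deriv

lemma d2 {ζ : ℝ → ℝ} (hζ : Continuous ζ) :
    iteratedDeriv 2 (phiOf ζ) = fun x => ζ x * Efun ζ x / cOf ζ := by
  rw [show (2:ℕ) = 1 + 1 from rfl, iteratedDeriv_succ, d1 hζ]
  funext x
  exact ((hasDerivAt_Efun hζ x).div_const _).deriv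

lemma d3 {ζ : ℝ → ℝ} (hζ : ContDiff ℝ 1 ζ) :
    iteratedDeriv 3 (phiOf ζ) =
      fun x => (deriv ζ x * Efun ζ x + ζ x * (ζ x * Efun ζ x)) / cOf ζ := by
  have hc : Continuous ζ := hζ.continuous
  rw [show (3:ℕ) = 2 + 1 from rfl, iteratedDeriv_succ, d2 hc]
  funext x
  have hd : HasDerivAt ζ (deriv ζ x) x := (hζ.differentiable one_ne_zero x).hasDerivAt
  exact ((hd.mul (hasDerivAt_Efun hc x)).div_const _).deriv

lemma bdd_of_cont {F : ℝ → ℝ} (h : Continuous F) :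
    ∃ M, ∀ x ∈ Icc (0:ℝ) 1, |F x| ≤ M := by
  simpa [Real.norm_eq_abs] using isCompact_Icc.exists_bound_of_continuousOn h.continuousOn

lemma tuo_const {c : ℕ → ℝ} {C : ℝ} (hc : Tendsto c atTop (nhds C)) (s : Set ℝ) :
    TendstoUniformlyOn (fun n (_ : ℝ) => c n) (fun _ => C) atTop s := by
  rw [Metric.tendstoUniformlyOn_iff]
  intro ε hε
  filter_upwards [Metric.tendsto_nhds.mp hc ε hε] with n hn x _
  rw [dist_comm]
  exact hn

lemma tuo_mul {f g : ℕ → ℝ → ℝ} {F G : ℝ → ℝ} {s : Set ℝ}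
    (hf : TendstoUniformlyOn f F atTop s) (hg : TendstoUniformlyOn g G atTop s)
    (hF : ∃ M, ∀ x ∈ s, |F x| ≤ M) (hG : ∃ M, ∀ x ∈ s, |G x| ≤ M) :
    TendstoUniformlyOn (fun n x => f n x * g n x) (fun x => F x * G x) atTop s := by
  obtain ⟨Mf, hMf⟩ := hF
  obtain ⟨Mg, hMg⟩ := hG
  rw [Metric.tendstoUniformlyOn_iff] at hf hg ⊢
  intro ε hε
  set δ := min 1 (ε / (|Mf| + |Mg| + 2)) with hδdef
  have hδpos : 0 < δ := lt_min one_pos (by positivity)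
  have hδ1 : δ ≤ 1 := min_le_left _ _
  have hδ2 : δ * (|Mf| + |Mg| + 2) ≤ ε := by
    have h := min_le_right 1 (ε / (|Mf| + |Mg| + 2))
    rw [le_div_iff₀ (by positivity)] at h
    exact h
  filter_upwards [hf δ hδpos, hg δ hδpos] with n hfn hgn x hx
  have h1 : |F x - f n x| < δ := by rw [← Real.dist_eq]; exact hfn x hx
  have h2 : |G x - g n x| < δ := by rw [← Real.dist_eq]; exact hgn x hx
  have hFb : |F x| ≤ |Mf| := (hMf x hx).trans (le_abs_self _)
  have hGb : |G x| ≤ |Mg| := (hMg x hx).trans (le_abs_self _)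
  have hgb : |g n x| ≤ |Mg| + 1 := by
    calc |g n x| = |G x - (G x - g n x)| := by ring_nf
      _ ≤ |G x| + |G x - g n x| := abs_sub _ _
      _ ≤ |Mg| + 1 := add_le_add hGb (h2.le.trans hδ1)
  rw [Real.dist_eq]
  calc |F x * G x - f n x * g n x|
      = |F x * (G x - g n x) + (F x - f n x) * g n x| := by ring_nf
    _ ≤ |F x * (G x - g n x)| + |(F x - f n x) * g n x| := abs_add_le _ _
    _ = |F x| * |G x - g n x| + |F x - f n x| * |g n x| := by rw [abs_mul, abs_mul]
    _ < ε := by nlinarith [abs_nonneg (F x), abs_nonneg (G x - g n x),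
        abs_nonneg (F x - f n x), abs_nonneg (g n x), abs_nonneg Mf, abs_nonneg Mg]

lemma tuo_div {f : ℕ → ℝ → ℝ} {F : ℝ → ℝ} {c : ℕ → ℝ} {C : ℝ} {s : Set ℝ}
    (hf : TendstoUniformlyOn f F atTop s) (hc : Tendsto c atTop (nhds C))
    (hC : 0 < C) (hF : ∃ M, ∀ x ∈ s, |F x| ≤ M) :
    TendstoUniformlyOn (fun n x => f n x / c n) (fun x => F x / C) atTop s := by
  have h := tuo_mul hf (tuo_const (hc.inv₀ hC.ne') s) hF
    ⟨|C⁻¹|, fun x _ => le_rfl⟩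
  simpa [div_eq_mul_inv] using h

lemma tuo_exp {g : ℕ → ℝ → ℝ} {G : ℝ → ℝ} {s : Set ℝ}
    (hg : TendstoUniformlyOn g G atTop s) {M : ℝ} (hM : ∀ x ∈ s, G x ≤ M) :
    TendstoUniformlyOn (fun n x => Real.exp (g n x)) (fun x => Real.exp (G x)) atTop s := by
  rw [Metric.tendstoUniformlyOn_iff] at hg ⊢
  intro ε hε
  have hK : 0 < Real.exp M := Real.exp_pos M
  set K := Real.exp M with hKdef
  set δ := min 1 (ε / (2 * K + 1)) with hδdef
  have hδpos : 0 < δ := lt_min one_pos (by positivity)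
  have hδ2 : δ * (2 * K + 1) ≤ ε := by
    have h := min_le_right 1 (ε / (2 * K + 1))
    rw [le_div_iff₀ (by positivity)] at h
    exact h
  filter_upwards [hg δ hδpos] with n hn x hx
  have h1 : |G x - g n x| < δ := by rw [← Real.dist_eq]; exact hn x hx
  have h1' : |g n x - G x| < δ := by rw [abs_sub_comm]; exact h1
  have h1'' : |g n x - G x| ≤ 1 := h1'.le.trans (min_le_left _ _)
  rw [Real.dist_eq]
  have e : Real.exp (G x) - Real.exp (g n x)
      = -(Real.exp (G x) * (Real.exp (g n x - G x) - 1)) := by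
    rw [Real.exp_sub]
    have := (Real.exp_pos (G x)).ne'
    field_simp
    ring
  calc |Real.exp (G x) - Real.exp (g n x)|
      = Real.exp (G x) * |Real.exp (g n x - G x) - 1| := by
        rw [e, abs_neg, abs_mul, abs_of_pos (Real.exp_pos _)]
    _ ≤ K * (2 * |g n x - G x|) := by
        apply mul_le_mul (Real.exp_le_exp.2 (hM x hx))
          (Real.abs_exp_sub_one_le h1'') (abs_nonneg _) hK.le
    _ < ε := by nlinarith [abs_nonneg (g n x - G x)]

lemma tuo_integral {f : ℕ → ℝ → ℝ} {F : ℝ → ℝ}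
    (hfc : ∀ n, Continuous (f n)) (hFc : Continuous F)
    (h : TendstoUniformlyOn f F atTop (Icc 0 1)) :
    TendstoUniformlyOn (fun n x => ∫ t in (0:ℝ)..x, f n t)
      (fun x => ∫ t in (0:ℝ)..x, F t) atTop (Icc 0 1) := by
  rw [Metric.tendstoUniformlyOn_iff] at h ⊢
  intro ε hε
  filter_upwards [h (ε / 2) (by positivity)] with n hn x hx
  obtain ⟨hx0, hx1⟩ := hx
  rw [Real.dist_eq, ← intervalIntegral.integral_sub (hFc.intervalIntegrable _ _)
    ((hfc n).intervalIntegrable _ _)]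
  have hb : ∀ t ∈ Set.uIoc (0:ℝ) x, ‖F t - f n t‖ ≤ ε / 2 := by
    intro t ht
    rw [Set.uIoc_of_le hx0] at ht
    have ht' : t ∈ Icc (0:ℝ) 1 := ⟨ht.1.le, ht.2.trans hx1⟩
    have hd := hn t ht'
    rw [Real.dist_eq] at hd
    simpa [Real.norm_eq_abs] using hd.le
  have hbound := intervalIntegral.norm_integral_le_of_norm_le_const hb
  rw [Real.norm_eq_abs] at hbound
  calc |∫ t in (0:ℝ)..x, (F t - f n t)| ≤ ε / 2 * |x - 0| := hbound
    _ ≤ ε / 2 * 1 := by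
        apply mul_le_mul_of_nonneg_left _ (by positivity)
        rw [sub_zero, abs_of_nonneg hx0]
        exact hx1
    _ < ε := by linarith

theorem stmt2 (η : ℕ → ℝ → ℝ) (ηlim : ℝ → ℝ)
    (hη : ∀ n, ContDiff ℝ 1 (η n)) (hηlim : ContDiff ℝ 1 ηlim)
    (hconv : TendstoUniformlyOn (fun n => η n) ηlim Filter.atTop (Icc 0 1))
    (hconv' : TendstoUniformlyOn (fun n => deriv (η n)) (deriv ηlim) Filter.atTop (Icc 0 1)) :
    ∀ k : ℕ, k ≤ 3 →
      TendstoUniformlyOn (fun n => iteratedDeriv k (phiOf (η n)))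
        (iteratedDeriv k (phiOf ηlim)) Filter.atTop (Icc 0 1) := by
  have hηc : ∀ n, Continuous (η n) := fun n => (hη n).continuous
  have hlc : Continuous ηlim := hηlim.continuous
  -- convergence of the integrals Gfun
  have hG : TendstoUniformlyOn (fun n x => Gfun (η n) x) (Gfun ηlim) atTop (Icc 0 1) :=
    tuo_integral hηc hlc hconv
  -- convergence of Efun
  obtain ⟨MG, hMG⟩ := bdd_of_cont (continuous_Gfun hlc)
  have hE : TendstoUniformlyOn (fun n x => Efun (η n) x) (Efun ηlim) atTop (Icc 0 1) :=
    tuo_exp hG (fun x hx => (le_abs_self _).trans (hMG x hx))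
  -- convergence of primitives of Efun
  have hFF : TendstoUniformlyOn (fun n x => ∫ s in (0:ℝ)..x, Efun (η n) s)
      (fun x => ∫ s in (0:ℝ)..x, Efun ηlim s) atTop (Icc 0 1) :=
    tuo_integral (fun n => continuous_Efun (hηc n)) (continuous_Efun hlc) hE
  -- convergence of the constants
  have hc : Tendsto (fun n => cOf (η n)) atTop (nhds (cOf ηlim)) :=
    hFF.tendsto_at ⟨zero_le_one, le_rfl⟩
  have cpos : 0 < cOf ηlim := cOf_pos hlc
  -- bounds on the limit functions
  have bE := bdd_of_cont (continuous_Efun hlc)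
  have bη := bdd_of_cont hlc
  have bη' := bdd_of_cont (hηlim.continuous_deriv le_rfl)
  have bF := bdd_of_cont (continuous_iff_continuousAt.2 fun x =>
    (hasDerivAt_primitive hlc x).differentiableAt.continuousAt)
  intro k hk
  interval_cases k
  · -- k = 0
    simp only [iteratedDeriv_zero]
    exact tuo_div hFF hc cpos bF
  · -- k = 1
    have e1 : ∀ n, iteratedDeriv 1 (phiOf (η n)) = fun x => Efun (η n) x / cOf (η n) :=
      fun n => d1 (hηc n)
    simp only [e1, d1 hlc]
    exact tuo_div hE hc cpos bE
  · -- k = 2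
    have e2 : ∀ n, iteratedDeriv 2 (phiOf (η n)) = fun x => η n x * Efun (η n) x / cOf (η n) :=
      fun n => d2 (hηc n)
    simp only [e2, d2 hlc]
    exact tuo_div (tuo_mul hconv hE bη bE) hc cpos
      (bdd_of_cont (hlc.mul (continuous_Efun hlc)))
  · -- k = 3
    have e3 : ∀ n, iteratedDeriv 3 (phiOf (η n)) =
        fun x => (deriv (η n) x * Efun (η n) x + η n x * (η n x * Efun (η n) x)) / cOf (η n) :=
      fun n => d3 (hη n)
    simp only [e3, d3 hηlim]
    have hnum : TendstoUniformlyOn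
        (fun n x => deriv (η n) x * Efun (η n) x + η n x * (η n x * Efun (η n) x))
        (fun x => deriv ηlim x * Efun ηlim x + ηlim x * (ηlim x * Efun ηlim x))
        atTop (Icc 0 1) := by
      have h1 := tuo_mul hconv' hE bη' bE
      have h2 := tuo_mul hconv (tuo_mul hconv hE bη bE)
        bη (bdd_of_cont (hlc.mul (continuous_Efun hlc)))
      exact h1.add h2
    exact tuo_div hnum hc cpos
      (bdd_of_cont (((hηlim.continuous_deriv le_rfl).mul (continuous_Efun hlc)).add
        (hlc.mul (hlc.mul (continuous_Efun hlc)))))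
end

section
/- For every real ℓ with 0 < ℓ < 2, the number 1 is not an eigenvalue of L (equivalently, I − L is invertible), and hence for every vector w* ∈ ℝ⁴ there exists a unique vector w_fix ∈ ℝ⁴ satisfying L·w_fix + w* = w_fix. -/
/-- The matrix `L` of the linearized renormalization recursion. -/
noncomputable def Lmat (ℓ : ℝ) : Matrix (Fin 4) (Fin 4) ℝ :=
  !![1 + 1/ℓ, 1, 0, -1;
     -(1/ℓ), -1, 0, 1;
     1, 0, -1, 0;
     1 - 1/ℓ, 0, 0, 0]

theorem stmt8 (ℓ : ℝ) (h0 : 0 < ℓ) (h2 : ℓ < 2) :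
    (1 : ℝ) ∉ spectrum ℝ (Lmat ℓ) ∧
    IsUnit ((1 : Matrix (Fin 4) (Fin 4) ℝ) - Lmat ℓ) ∧
    ∀ wstar : Fin 4 → ℝ, ∃! wfix : Fin 4 → ℝ, (Lmat ℓ).mulVec wfix + wstar = wfix := by
  have hl : ℓ ≠ 0 := ne_of_gt h0
  have hdet : ((1 : Matrix (Fin 4) (Fin 4) ℝ) - Lmat ℓ).det = 2 * (ℓ - 2) / ℓ := by
    have h1 : (1 : Matrix (Fin 4) (Fin 4) ℝ) - Lmat ℓ =
        !![-(1/ℓ), -1, 0, 1;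
           1/ℓ, 2, 0, -1;
           -1, 0, 2, 0;
           -(1 - 1/ℓ), 0, 0, 1] := by
      ext i j
      fin_cases i <;> fin_cases j <;>
        simp [Lmat, Matrix.one_apply, Matrix.vecHead, Matrix.vecTail] <;> ring
    rw [h1]
    simp [Matrix.det_succ_row_zero, Fin.sum_univ_succ, Fin.succAbove, Fin.castSucc,
      Fin.castAdd, Fin.castLE, Matrix.vecHead, Matrix.vecTail]
    field_simp
    ring
  have hunit : IsUnit ((1 : Matrix (Fin 4) (Fin 4) ℝ) - Lmat ℓ) := by
    rw [Matrix.isUnit_iff_isUnit_det, hdet, isUnit_iff_ne_zero]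
    have : ℓ - 2 ≠ 0 := sub_ne_zero.mpr (ne_of_lt h2)
    positivity
  have hspec : (1 : ℝ) ∉ spectrum ℝ (Lmat ℓ) := by
    rw [spectrum.notMem_iff]
    simpa using hunit
  refine ⟨hspec, hunit, fun wstar => ?_⟩
  set A := (1 : Matrix (Fin 4) (Fin 4) ℝ) - Lmat ℓ with hA
  have hkey : ∀ v : Fin 4 → ℝ, ((Lmat ℓ).mulVec v + wstar = v ↔ A.mulVec v = wstar) := by
    intro v
    rw [hA, Matrix.sub_mulVec, Matrix.one_mulVec]
    constructor
    · intro h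
      exact sub_eq_iff_eq_add.mpr (by rw [add_comm]; exact h.symm)
    · intro h; rw [← h]; abel
  refine ⟨A⁻¹.mulVec wstar, (hkey _).mpr ?_, ?_⟩
  · rw [Matrix.mulVec_mulVec, Matrix.mul_nonsing_inv _ ((Matrix.isUnit_iff_isUnit_det A).mp hunit), Matrix.one_mulVec]
  · intro v hv
    rw [hkey] at hv
    rw [← hv, Matrix.mulVec_mulVec, Matrix.nonsing_inv_mul _ ((Matrix.isUnit_iff_isUnit_det A).mp hunit), Matrix.one_mulVec]
end

section
/- For every r ∈ (0,1), every K > 0 and every λ > 1 there exist λ₀ > 1 and δ > 0 with the following property. Let Z be any Banach space, and equip V = ℝ × ℝ⁴ × Z with the norm ‖(x,y,z)‖ = |x| + ‖y‖ + ‖z‖. For ρ, σ > 0 define the cone C_{ρ,σ} = {(x,y,z) ∈ V : ‖y‖ ≤ ρ|x| and ‖z‖ ≤ σ|x|}, and in ℝ⁵ = ℝ × ℝ⁴ define C_ρ = {(x,y) : ‖y‖ ≤ ρ|x|} with norm |x| + ‖y‖. Let T : V → V be a bounded linear operator of block form T(x,y,z) = (A(x,y) + B z, C(x,y) + D z) with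 A : ℝ⁵ → ℝ⁵, B : Z → ℝ⁵, C : ℝ⁵ → Z, D : Z → Z, such that: A maps C_r into C_{r/3}; ‖A v‖ ≥ λ₀‖v‖ for all v ∈ C_r; and ‖B‖, ‖C‖, ‖D‖ ≤ K. Then T maps C_{r,δ} into C_{r/2, δ/2}, and ‖T v‖ ≥ λ·‖v‖ for every v ∈ C_{r,δ}. -/
set_option maxHeartbeats 1600000 in
theorem stmt13 (r K lam : ℝ) (hr : r ∈ Set.Ioo (0:ℝ) 1) (hK : 0 < K) (hlam : 1 < lam) :
    ∃ lam0 δ : ℝ, 1 < lam0 ∧ 0 < δ ∧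
      ∀ (Z : Type) [inst1 : NormedAddCommGroup Z] [inst2 : NormedSpace ℝ Z],
      ∀ (A : (ℝ × (Fin 4 → ℝ)) →ₗ[ℝ] ℝ × (Fin 4 → ℝ))
        (B : Z →ₗ[ℝ] ℝ × (Fin 4 → ℝ))
        (C : (ℝ × (Fin 4 → ℝ)) →ₗ[ℝ] Z)
        (D : Z →ₗ[ℝ] Z),
        -- A maps the cone C_r into the cone C_{r/3}
        (∀ p : ℝ × (Fin 4 → ℝ), ‖p.2‖ ≤ r * |p.1| → ‖(A p).2‖ ≤ r / 3 * |(A p).1|) →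
        -- A expands vectors of the cone C_r by a factor λ₀
        (∀ p : ℝ × (Fin 4 → ℝ), ‖p.2‖ ≤ r * |p.1| →
          lam0 * (|p.1| + ‖p.2‖) ≤ |(A p).1| + ‖(A p).2‖) →
        -- the blocks B, C, D are bounded by K
        (∀ z : Z, |(B z).1| + ‖(B z).2‖ ≤ K * ‖z‖) →
        (∀ p : ℝ × (Fin 4 → ℝ), ‖C p‖ ≤ K * (|p.1| + ‖p.2‖)) →
        (∀ z : Z, ‖D z‖ ≤ K * ‖z‖) →
        -- then T(x,y,z) = (A(x,y) + Bz, C(x,y) + Dz) maps C_{r,δ} into C_{r/2,δ/2}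
        -- and expands vectors of C_{r,δ} by a factor λ
        ∀ v : (ℝ × (Fin 4 → ℝ)) × Z,
          ‖v.1.2‖ ≤ r * |v.1.1| → ‖v.2‖ ≤ δ * |v.1.1| →
          (‖(A v.1 + B v.2).2‖ ≤ r / 2 * |(A v.1 + B v.2).1| ∧
            ‖C v.1 + D v.2‖ ≤ δ / 2 * |(A v.1 + B v.2).1| ∧
            lam * (|v.1.1| + ‖v.1.2‖ + ‖v.2‖) ≤
              |(A v.1 + B v.2).1| + ‖(A v.1 + B v.2).2‖ + ‖C v.1 + D v.2‖) := by
  obtain ⟨hr0, hr1⟩ := hr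
  set δ : ℝ := min (r / (12 * K)) 1 with hδdef
  have hδ0 : 0 < δ := lt_min (by positivity) one_pos
  have hδ1 : δ ≤ 1 := min_le_right _ _
  have hδK : δ * (12 * K) ≤ r := by
    have := min_le_left (r / (12 * K)) 1
    rw [le_div_iff₀ (by positivity)] at this
    linarith [this]
  refine ⟨2 * lam + 3 * K + 8 * K / δ, δ, ?_, hδ0, ?_⟩
  · have : 0 < 8 * K / δ := by positivity
    linarith
  set lam0 : ℝ := 2 * lam + 3 * K + 8 * K / δ with hl0def
  have hl : lam0 * δ = 2 * lam * δ + 3 * K * δ + 8 * K := by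
    rw [hl0def, add_mul, div_mul_cancel₀ _ hδ0.ne']
    ring
  intro Z inst1 inst2 A B C D hAcone hAexp hB hC hD v hv1 hv2
  -- scalar abbreviations
  have hcone : ‖(A v.1).2‖ ≤ r / 3 * |(A v.1).1| := hAcone v.1 hv1
  have hexp : lam0 * (|v.1.1| + ‖v.1.2‖) ≤ |(A v.1).1| + ‖(A v.1).2‖ := hAexp v.1 hv1
  have hBz := hB v.2
  have hCv := hC v.1
  have hDz := hD v.2
  have e1 : (A v.1 + B v.2).1 = (A v.1).1 + (B v.2).1 := rfl
  have e2 : (A v.1 + B v.2).2 = (A v.1).2 + (B v.2).2 := rfl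
  -- triangle inequalities
  have t1u : |(A v.1).1 + (B v.2).1| ≤ |(A v.1).1| + |(B v.2).1| := abs_add_le _ _
  have t1l : |(A v.1).1| - |(B v.2).1| ≤ |(A v.1).1 + (B v.2).1| := by
    have h := abs_sub_abs_le_abs_sub ((A v.1).1) (-(B v.2).1)
    simpa [sub_neg_eq_add] using h
  have t2u : ‖(A v.1).2 + (B v.2).2‖ ≤ ‖(A v.1).2‖ + ‖(B v.2).2‖ := norm_add_le _ _
  have t2l : ‖(A v.1).2‖ - ‖(B v.2).2‖ ≤ ‖(A v.1).2 + (B v.2).2‖ := by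
    have h := norm_sub_norm_le ((A v.1).2) (-(B v.2).2)
    simpa [sub_neg_eq_add] using h
  have t3u : ‖C v.1 + D v.2‖ ≤ ‖C v.1‖ + ‖D v.2‖ := norm_add_le _ _
  have t3z : (0:ℝ) ≤ ‖C v.1 + D v.2‖ := norm_nonneg _
  -- generic nonnegativity
  have hx : (0:ℝ) ≤ |v.1.1| := abs_nonneg _
  have hy : (0:ℝ) ≤ ‖v.1.2‖ := norm_nonneg _
  have hz : (0:ℝ) ≤ ‖v.2‖ := norm_nonneg _
  have ha : (0:ℝ) ≤ |(A v.1).1| := abs_nonneg _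
  have hb : (0:ℝ) ≤ ‖(A v.1).2‖ := norm_nonneg _
  have hB1 : (0:ℝ) ≤ |(B v.2).1| := abs_nonneg _
  have hB2 : (0:ℝ) ≤ ‖(B v.2).2‖ := norm_nonneg _
  have hv1' := hv1
  have hv2' := hv2
  rw [e1, e2]
  clear hAcone hAexp hB hC hD hv1 hv2
  set x := |v.1.1| with hx'
  set y := ‖v.1.2‖ with hy'
  set z := ‖v.2‖ with hz'
  set a := |(A v.1).1| with ha'
  set b := ‖(A v.1).2‖ with hb'
  set B1 := |(B v.2).1| with hB1'
  set B2 := ‖(B v.2).2‖ with hB2'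
  set Cn := ‖C v.1‖ with hCn'
  set Dn := ‖D v.2‖ with hDn'
  set T1 := |(A v.1).1 + (B v.2).1| with hT1'
  set T2 := ‖(A v.1).2 + (B v.2).2‖ with hT2'
  set T3 := ‖C v.1 + D v.2‖ with hT3'
  have hT1 : 0 ≤ T1 := abs_nonneg _
  have hT2 : 0 ≤ T2 := norm_nonneg _
  have hDn0 : 0 ≤ Dn := norm_nonneg _
  have hCn0 : 0 ≤ Cn := norm_nonneg _
  clear_value x y z a b B1 B2 Cn Dn T1 T2 T3
  clear hx' hy' hz' ha' hb' hB1' hB2' hCn' hDn' hT1' hT2' hT3' e1 e2 t1u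
  clear A B C D v inst1 inst2 Z
  have hlam0_ge : (2:ℝ) ≤ lam0 := by
    have h8 : 0 < 8 * K / δ := by positivity
    simp only [hl0def]; linarith
  have hzx : z ≤ δ * x := hv2'
  have hlam0x : 0 ≤ lam0 * y := mul_nonneg (by linarith) hy
  have hlam0_big : lam + lam * δ + K * δ ≤ lam0 := by
    have h8 : 0 < 8 * K / δ := by positivity
    have h1 : lam * δ ≤ lam := by nlinarith [mul_le_mul_of_nonneg_left hδ1 (by linarith : (0:ℝ) ≤ lam)]
    have h2 : K * δ ≤ K := by nlinarith [mul_le_mul_of_nonneg_left hδ1 hK.le]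
    simp only [hl0def]; linarith
  clear_value δ lam0
  clear hδdef hl0def
  have hKey : lam0 * x ≤ (4/3) * a := by
    linarith [mul_le_mul_of_nonneg_right hr1.le ha, hlam0x, hexp, hcone]
  have hKδx : K * z ≤ K * (δ * x) := mul_le_mul_of_nonneg_left hzx hK.le
  have hw : K * (δ * x) ≤ r / 12 * x := by
    have := mul_le_mul_of_nonneg_right hδK hx
    linarith
  have hax : 3 * x ≤ 2 * a := by
    have h2 : 2 * x ≤ lam0 * x := mul_le_mul_of_nonneg_right hlam0_ge hx
    linarith
  have hB1w : B1 ≤ r / 12 * x := by linarith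
  refine ⟨?_, ?_, ?_⟩
  · -- cone condition on the y-part
    have p1 : r / 2 * (a - B1) ≤ r / 2 * T1 :=
      mul_le_mul_of_nonneg_left t1l (by linarith)
    have p2 : r / 2 * B1 ≤ r / 2 * (r / 12 * x) :=
      mul_le_mul_of_nonneg_left hB1w (by linarith)
    have p3 : r * (r * x) ≤ 1 * (r * x) :=
      mul_le_mul_of_nonneg_right hr1.le (mul_nonneg hr0.le hx)
    have p5 : r * (3 * x) ≤ r * (2 * a) := mul_le_mul_of_nonneg_left hax hr0.le
    linarith
  · -- cone condition on the z-part
    have m1 : δ * (lam0 * x) ≤ δ * (4/3 * a) := mul_le_mul_of_nonneg_left hKey hδ0.le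
    have m2 : lam0 * δ * x = (2 * lam * δ + 3 * K * δ + 8 * K) * x := by rw [hl]
    have m3 : δ / 2 * (a - B1) ≤ δ / 2 * T1 :=
      mul_le_mul_of_nonneg_left t1l (by linarith)
    have m4 : B1 ≤ K * (δ * x) := by linarith
    have m5 : δ / 2 * B1 ≤ δ / 2 * (K * (δ * x)) :=
      mul_le_mul_of_nonneg_left m4 (by linarith)
    have m6 : K * δ * x * δ ≤ K * δ * x * 1 :=
      mul_le_mul_of_nonneg_left hδ1 (by positivity)
    have m7 : K * x * δ ≤ K * x * 1 :=
      mul_le_mul_of_nonneg_left hδ1 (by positivity)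
    have m8 : K * y ≤ K * (r * x) := mul_le_mul_of_nonneg_left hv1' hK.le
    have m8' : K * x * r ≤ K * x * 1 :=
      mul_le_mul_of_nonneg_left hr1.le (by positivity)
    have m9 : 0 ≤ lam * δ * x := by positivity
    linarith
  · -- expansion
    have n1 : (lam + lam * δ + K * δ) * x ≤ lam0 * x :=
      mul_le_mul_of_nonneg_right hlam0_big hx
    have n2 : lam * y ≤ lam0 * y := by
      have hll : lam ≤ lam0 := by linarith [mul_nonneg (by linarith : (0:ℝ) ≤ lam) hδ0.le, mul_nonneg hK.le hδ0.le]
      exact mul_le_mul_of_nonneg_right hll hy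
    have n3 : lam * z ≤ lam * (δ * x) :=
      mul_le_mul_of_nonneg_left hzx (by linarith)
    linarith
end
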